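/- Let K ⊂ ℝ^d be a self-similar set generated by contracting similarities ψ₁,…,ψ_k with ratios r₁,…,r_k satisfying the open set condition, with Σᵢ rᵢ^d = 1 (so dim_M K = d), and suppose ψ_k(K) is contained in the interior of K. Let U = K°. Then the boundary of K satisfies ∂K ⊆ L, where L is the self-similar attractor of ψ₁,…,ψ_{k−1}; consequently the upper Minkowski dimension of ∂K is strictly less than d. -/

import Mathlib

open Metric Set MeasureTheory

/-- The upper Minkowski dimension of a bounded set `A ⊆ ℝ^d`, expressed through the
volumes of its parallel sets: `dim_M A = d − liminf_{ε→0⁺} log vol(A_ε) / log ε`. -/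
noncomputable def upperMinkowskiDim {d : ℕ} (A : Set (EuclideanSpace ℝ (Fin d))) : ℝ :=
  (d : ℝ) - Filter.liminf
    (fun ε : ℝ =>
      Real.log ((volume (Metric.cthickening ε A)).toReal) / Real.log ε)
    (nhdsWithin 0 (Set.Ioi 0))


private lemma sim_key {d : ℕ} (f : EuclideanSpace ℝ (Fin d) → EuclideanSpace ℝ (Fin d)) (r : ℝ) (hr : 0 < r)
    (hf : ∀ x y, dist (f x) (f y) = r * dist x y) :
    Function.Surjective f ∧ IsOpenMap f ∧
      ∀ s : Set (EuclideanSpace ℝ (Fin d)), volume (f '' s) = ENNReal.ofReal (r ^ d) * volume s := by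
  set g : EuclideanSpace ℝ (Fin d) → EuclideanSpace ℝ (Fin d) := fun x => r⁻¹ • f x with hgdef
  have hgiso : Isometry g := by
    apply Isometry.of_dist_eq
    intro x y
    simp only [hgdef, dist_smul₀, hf, norm_inv, Real.norm_of_nonneg hr.le]
    field_simp
  set A := hgiso.affineIsometryOfStrictConvexSpace with hA
  have hAg : ∀ x, A x = g x := fun x => rfl
  set U : EuclideanSpace ℝ (Fin d) ≃ₗᵢ[ℝ]  EuclideanSpace ℝ (Fin d) :=
    A.linearIsometry.toLinearIsometryEquiv rfl with hU
  have hUA : ∀ x, (U x : EuclideanSpace ℝ (Fin d)) = A.linearIsometry x := fun x => rfl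
  have hgx : ∀ x : EuclideanSpace ℝ (Fin d), g x = U x + g 0 := by
    intro x
    have := A.map_vadd (0 : EuclideanSpace ℝ (Fin d)) x
    simpa [hAg, hUA] using this
  have hfx : ∀ x : EuclideanSpace ℝ (Fin d), f x = r • (U x) + r • g 0 := by
    intro x
    have : f x = r • g x := by
      simp only [hgdef, smul_smul, mul_inv_cancel₀ hr.ne', one_smul]
    rw [this, hgx, smul_add]
  have hcomp : f = (fun y => y + r • g 0) ∘ (fun y => r • y) ∘ U := by
    funext x; simp [hfx]
  have hsurj : Function.Surjective f := by
    rw [hcomp]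
    refine Function.Surjective.comp ?_ (Function.Surjective.comp ?_ U.surjective)
    · exact fun y => ⟨y - r • g 0, by simp⟩
    · intro y
      exact ⟨r⁻¹ • y, by simp [smul_smul, mul_inv_cancel₀ hr.ne']⟩
  have hopen : IsOpenMap f := by
    rw [hcomp]
    refine IsOpenMap.comp ?_ (IsOpenMap.comp ?_ U.toHomeomorph.isOpenMap)
    · exact isOpenMap_add_right _
    · exact isOpenMap_smul₀ hr.ne'
  have hvol : ∀ s : Set (EuclideanSpace ℝ (Fin d)), volume (f '' s) = ENNReal.ofReal (r ^ d) * volume s := by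
    intro s
    have h1 : f '' s = (fun y => y + r • g 0) '' ((fun y => r • y) '' (U '' s)) := by
      rw [hcomp, image_comp, image_comp]
    have hUvol : volume ((U : EuclideanSpace ℝ (Fin d) → EuclideanSpace ℝ (Fin d)) '' s) = volume s := by
      have hme : (U.toHomeomorph.toMeasurableEquiv : EuclideanSpace ℝ (Fin d) ≃ᵐ EuclideanSpace ℝ (Fin d)) '' s
          = (U.toHomeomorph.toMeasurableEquiv.symm) ⁻¹' s := by
        exact Equiv.image_eq_preimage_symm _ s
      calc volume ((U : EuclideanSpace ℝ (Fin d) → EuclideanSpace ℝ (Fin d)) '' s)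
          = volume ((U.toHomeomorph.toMeasurableEquiv.symm) ⁻¹' s) := by rw [← hme]; rfl
        _ = Measure.map (U.toHomeomorph.toMeasurableEquiv.symm) volume s := by
            rw [MeasurableEquiv.map_apply]
        _ = volume s := by
            have hco : (⇑U.toHomeomorph.toMeasurableEquiv.symm : EuclideanSpace ℝ (Fin d) → EuclideanSpace ℝ (Fin d)) = ⇑U.symm := rfl
            rw [hco, (U.symm.measurePreserving).map_eq]
    have hsmul : ∀ t : Set (EuclideanSpace ℝ (Fin d)), volume ((fun y => r • y) '' t)
        = ENNReal.ofReal (r ^ d) * volume t := by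
      intro t
      rw [Set.image_smul, MeasureTheory.Measure.addHaar_smul_of_nonneg volume hr.le,
        finrank_euclideanSpace_fin]
    have htrans : ∀ t : Set (EuclideanSpace ℝ (Fin d)), volume ((fun y : EuclideanSpace ℝ (Fin d) => y + r • g 0) '' t) = volume t := by
      intro t
      have : (fun y : EuclideanSpace ℝ (Fin d) => y + r • g 0) '' t = (fun y : EuclideanSpace ℝ (Fin d) => y + (- (r • g 0))) ⁻¹' t := by
        ext y
        constructor
        · rintro ⟨x, hx, rfl⟩; simpa
        · intro h; exact ⟨y - r • g 0, by simpa [sub_eq_add_neg] using h, by simp⟩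
      rw [this]
      exact measure_preimage_add_right volume _ t
    rw [h1, htrans, hsmul, hUvol]
  exact ⟨hsurj, hopen, hvol⟩

/-- Let `K ⊆ ℝ^d` be the attractor of contracting similarities `ψ₀,…,ψ_m` with
ratios `r i` satisfying the open set condition and `Σ rᵢ^d = 1` (full Minkowski
dimension), and suppose the last map satisfies `ψ_m(K) ⊆ K°`. Then `∂K ⊆ L`, where
`L` is the attractor of the first `m` maps, and the upper Minkowski dimension of
`∂K` is strictly less than `d`. -/
theorem stmt10 {d m : ℕ} (hd : 1 ≤ d) (hm : 1 ≤ m)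
    (ψ : Fin (m + 1) → EuclideanSpace ℝ (Fin d) → EuclideanSpace ℝ (Fin d))
    (r : Fin (m + 1) → ℝ)
    (hψ : ∀ i, 0 < r i ∧ r i < 1 ∧
      ∀ x y, dist (ψ i x) (ψ i y) = r i * dist x y)
    (K O : Set (EuclideanSpace ℝ (Fin d)))
    (hK : IsCompact K) (hKne : K.Nonempty) (hattr : K = ⋃ i, ψ i '' K)
    (hOopen : IsOpen O) (hOne : O.Nonempty)
    (hOfeas : (⋃ i, ψ i '' O) ⊆ O)
    (hOdisj : Pairwise fun i j => Disjoint (ψ i '' O) (ψ j '' O))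
    (hsum : ∑ i, r i ^ d = 1)
    (hlast : ψ (Fin.last m) '' K ⊆ interior K)
    (L : Set (EuclideanSpace ℝ (Fin d)))
    (hL : IsCompact L) (hLne : L.Nonempty)
    (hLattr : L = ⋃ i : Fin m, ψ i.castSucc '' L) :
    frontier K ⊆ L ∧ upperMinkowskiDim (frontier K) < d := by
  have hr0 : ∀ i, 0 < r i := fun i => (hψ i).1
  have hr1 : ∀ i, r i < 1 := fun i => (hψ i).2.1
  have hdist : ∀ i x y, dist (ψ i x) (ψ i y) = r i * dist x y := fun i => (hψ i).2.2
  have hsim := fun i => sim_key (ψ i) (r i) (hr0 i) (hdist i)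
  have hsurj : ∀ i, Function.Surjective (ψ i) := fun i => (hsim i).1
  have hopen : ∀ i, IsOpenMap (ψ i) := fun i => (hsim i).2.1
  have hvol : ∀ i (s : Set (EuclideanSpace ℝ (Fin d))),
      volume (ψ i '' s) = ENNReal.ofReal (r i ^ d) * volume s := fun i => (hsim i).2.2
  haveI : Nonempty (Fin m) := Fin.pos_iff_nonempty.mp hm
  haveI : Nonempty (Fin d) := Fin.pos_iff_nonempty.mp hd
  -- Part 1 : frontier K ⊆ L
  have hpart1 : frontier K ⊆ L := by
    have hsubK : ∀ i, ψ i '' K ⊆ K := by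
      intro i
      conv_rhs => rw [hattr]
      exact subset_iUnion (fun j => ψ j '' K) i
    have hintK : ∀ i x, x ∈ interior K → ψ i x ∈ interior K := by
      intro i x hx
      have h1 : ψ i x ∈ ψ i '' interior K := mem_image_of_mem _ hx
      have h2 : ψ i '' interior K ⊆ interior (ψ i '' K) :=
        (hopen i).image_interior_subset K
      exact interior_mono (hsubK i) (h2 h1)
    have hsubL : ∀ i : Fin m, ∀ x, x ∈ L → ψ i.castSucc x ∈ L := by
      intro i x hx
      have : ψ i.castSucc '' L ⊆ L := by
        conv_rhs => rw [hLattr]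
        exact subset_iUnion (fun j : Fin m => ψ j.castSucc '' L) i
      exact this (mem_image_of_mem _ hx)
    -- word maps
    set Φ : List (Fin m) → EuclideanSpace ℝ (Fin d) → EuclideanSpace ℝ (Fin d) :=
      fun w => w.foldr (fun i g => g ∘ ψ i.castSucc) id with hΦ
    have hΦnil : ∀ x, Φ [] x = x := fun _ => rfl
    have hΦcons : ∀ i w x, Φ (i :: w) x = Φ w (ψ i.castSucc x) := fun _ _ _ => rfl
    have hΦint : ∀ w x, x ∈ interior K → Φ w x ∈ interior K := by
      intro w
      induction w with
      | nil => intro x hx; exact hx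
      | cons i w ih =>
        intro x hx
        rw [hΦcons]
        exact ih _ (hintK _ _ hx)
    have hΦL : ∀ w x, x ∈ L → Φ w x ∈ L := by
      intro w
      induction w with
      | nil => intro x hx; exact hx
      | cons i w ih =>
        intro x hx
        rw [hΦcons]
        exact ih _ (hsubL _ _ hx)
    -- contraction ratio bound
    haveI : Nonempty (Fin m) := Fin.pos_iff_nonempty.mp hm
    set R : ℝ := Finset.univ.sup' Finset.univ_nonempty (fun i : Fin m => r i.castSucc) with hR
    have hR0 : 0 < R := by
      obtain ⟨i⟩ := ‹Nonempty (Fin m)›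
      rw [hR]
      exact lt_of_lt_of_le (hr0 i.castSucc)
        (Finset.le_sup' (fun j : Fin m => r j.castSucc) (Finset.mem_univ i))
    have hR1 : R < 1 := by
      rw [hR]
      exact (Finset.sup'_lt_iff Finset.univ_nonempty).mpr fun i _ => hr1 i.castSucc
    have hRle : ∀ i : Fin m, r i.castSucc ≤ R := by
      intro i
      rw [hR]
      exact Finset.le_sup' (fun j : Fin m => r j.castSucc) (Finset.mem_univ i)
    have hΦdist : ∀ w (x y : EuclideanSpace ℝ (Fin d)),
        dist (Φ w x) (Φ w y) ≤ R ^ w.length * dist x y := by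
      intro w
      induction w with
      | nil => intro x y; simp [hΦnil]
      | cons i w ih =>
        intro x y
        rw [hΦcons, hΦcons]
        calc dist (Φ w (ψ i.castSucc x)) (Φ w (ψ i.castSucc y))
            ≤ R ^ w.length * dist (ψ i.castSucc x) (ψ i.castSucc y) := ih _ _
          _ = R ^ w.length * (r i.castSucc * dist x y) := by rw [hdist]
          _ ≤ R ^ w.length * (R * dist x y) := by
              apply mul_le_mul_of_nonneg_left _ (pow_nonneg hR0.le _)
              exact mul_le_mul_of_nonneg_right (hRle i) dist_nonneg
          _ = R ^ (i :: w).length * dist x y := by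
              simp [pow_succ]; ring
    -- the covering property
    have hcover : ∀ x ∈ frontier K, ∀ n : ℕ,
        ∃ w : List (Fin m), w.length = n ∧ ∃ y ∈ K, Φ w y = x := by
      intro x hx n
      have hxK : x ∈ K := by
        have := frontier_subset_closure (s := K) hx
        rwa [hK.isClosed.closure_eq] at this
      have hxnotint : x ∉ interior K := by
        rw [hK.isClosed.frontier_eq] at hx
        exact hx.2
      induction n with
      | zero => exact ⟨[], rfl, x, hxK, rfl⟩
      | succ n ih =>
        obtain ⟨w, hwlen, y, hyK, hwy⟩ := ih
        have hyU : y ∈ ⋃ i, ψ i '' K := by rw [← hattr]; exact hyK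
        obtain ⟨i, z, hzK, hzy⟩ := by
          simpa only [mem_iUnion, mem_image] using hyU
        by_cases hi : i = Fin.last m
        · exfalso
          have hz : ψ (Fin.last m) z ∈ interior K := hlast (mem_image_of_mem _ hzK)
          rw [← hi, hzy] at hz
          exact hxnotint (hwy ▸ hΦint w y hz)
        · obtain ⟨j, rfl⟩ := Fin.exists_castSucc_eq.mpr hi
          refine ⟨j :: w, by simp [hwlen], z, hzK, ?_⟩
          rw [hΦcons, hzy, hwy]
    -- conclude
    intro x hx
    obtain ⟨z₀, hz₀⟩ := hLne
    obtain ⟨C, hC⟩ : ∃ C : ℝ, ∀ y ∈ K, dist y z₀ ≤ C := by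
      obtain ⟨C, hC⟩ := (hK.isBounded).subset_closedBall z₀
      exact ⟨C, fun y hy => by simpa [dist_comm] using hC hy⟩
    have hC0 : 0 ≤ C := by
      obtain ⟨y, hy⟩ := hKne
      exact le_trans dist_nonneg (hC y hy)
    have key : ∀ n : ℕ, infDist x L ≤ R ^ n * C := by
      intro n
      obtain ⟨w, hwlen, y, hyK, hwy⟩ := hcover x hx n
      have h1 : Φ w z₀ ∈ L := hΦL w z₀ hz₀
      calc infDist x L ≤ dist x (Φ w z₀) := infDist_le_dist_of_mem h1
        _ = dist (Φ w y) (Φ w z₀) := by rw [hwy]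
        _ ≤ R ^ w.length * dist y z₀ := hΦdist w y z₀
        _ ≤ R ^ n * C := by
            rw [hwlen]
            exact mul_le_mul_of_nonneg_left (hC y hyK) (pow_nonneg hR0.le n)
    have hzero : infDist x L ≤ 0 := by
      have htend : Filter.Tendsto (fun n : ℕ => R ^ n * C) Filter.atTop (nhds 0) := by
        simpa using (tendsto_pow_atTop_nhds_zero_of_lt_one hR0.le hR1).mul_const C
      exact ge_of_tendsto' htend key
    have : infDist x L = 0 := le_antisymm hzero infDist_nonneg
    rwa [← hL.isClosed.mem_iff_infDist_zero ⟨z₀, hz₀⟩] at this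
  refine ⟨hpart1, ?_⟩
  -- Part 2 : volume bound for thickenings of L
  have hθ0 : 0 < ∑ i : Fin m, r i.castSucc ^ d :=
    Finset.sum_pos (fun i _ => pow_pos (hr0 _) d) Finset.univ_nonempty
  have hθ1 : (∑ i : Fin m, r i.castSucc ^ d) < 1 := by
    rw [Fin.sum_univ_castSucc] at hsum
    have : 0 < r (Fin.last m) ^ d := pow_pos (hr0 _) d
    linarith
  set θ : ℝ := ∑ i : Fin m, r i.castSucc ^ d with hθdef
  set ρ : ℝ := Finset.univ.inf' Finset.univ_nonempty (fun i : Fin m => r i.castSucc) with hρdef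
  have hρle : ∀ i : Fin m, ρ ≤ r i.castSucc := by
    intro i
    rw [hρdef]
    exact Finset.inf'_le (fun j : Fin m => r j.castSucc) (Finset.mem_univ i)
  have hρ0 : 0 < ρ := by
    rw [hρdef]
    exact (Finset.lt_inf'_iff _).mpr fun i _ => hr0 i.castSucc
  have hρ1 : ρ < 1 := by
    obtain ⟨i⟩ := ‹Nonempty (Fin m)›
    exact lt_of_le_of_lt (hρle i) (hr1 i.castSucc)
  obtain ⟨x₀, hx₀⟩ := id hLne
  have hθ : θ = ∑ i : Fin m, r i.castSucc ^ d := hθdef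
  have Q : ∀ n : ℕ, ∀ ε : ℝ, 0 ≤ ε →
      volume (cthickening ε L)
        ≤ ENNReal.ofReal ((diam L + ε / ρ ^ n) ^ d * θ ^ n)
            * volume (ball (0 : EuclideanSpace ℝ (Fin d)) 1) := by
    set c := volume (ball (0 : EuclideanSpace ℝ (Fin d)) 1) with hc
    set D := diam L with hD
    have hD0 : 0 ≤ D := diam_nonneg
    have hθ0 : 0 ≤ θ := by
      rw [hθ]
      exact Finset.sum_nonneg fun i _ => pow_nonneg (hr0 _).le d
    intro n
    induction n with
    | zero =>
      intro ε hε
      have hsub : cthickening ε L ⊆ closedBall x₀ (ε + D) := by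
        have h1 : L ⊆ closedBall x₀ D :=
          fun y hy => mem_closedBall.mpr (dist_le_diam_of_mem hL.isBounded hy hx₀)
        calc cthickening ε L ⊆ cthickening ε (closedBall x₀ D) :=
              cthickening_subset_of_subset ε h1
          _ = closedBall x₀ (ε + D) := cthickening_closedBall hε hD0 x₀
      calc volume (cthickening ε L) ≤ volume (closedBall x₀ (ε + D)) := measure_mono hsub
        _ = ENNReal.ofReal ((ε + D) ^ d) * c := by
            rw [MeasureTheory.Measure.addHaar_closedBall volume x₀ (by linarith),
              finrank_euclideanSpace_fin]
        _ = ENNReal.ofReal ((D + ε / ρ ^ 0) ^ d * θ ^ 0) * c := by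
            norm_num [add_comm]
    | succ n ih =>
      intro ε hε
      -- pull back the thickening through each map
      have hsub : cthickening ε L
          ⊆ ⋃ i : Fin m, ψ i.castSucc '' cthickening (ε / r i.castSucc) L := by
        have hLU : IsCompact (⋃ i : Fin m, ψ i.castSucc '' L) := by
          apply isCompact_iUnion
          intro i
          exact hL.image (LipschitzWith.continuous
            (LipschitzWith.of_dist_le_mul (fun x y => by
              rw [hdist, Real.coe_toNNReal _ (hr0 i.castSucc).le])))
        intro y hy
        rw [hLattr] at hy
        rw [hLU.cthickening_eq_biUnion_closedBall hε] at hy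
        obtain ⟨z, hz, hyz⟩ := mem_iUnion₂.mp hy
        obtain ⟨i, hzi⟩ := mem_iUnion.mp hz
        obtain ⟨l, hl, rfl⟩ := hzi
        obtain ⟨x', rfl⟩ := hsurj i.castSucc y
        refine mem_iUnion.mpr ⟨i, mem_image_of_mem _ ?_⟩
        apply mem_cthickening_of_dist_le x' l _ _ hl
        have hdxy : dist x' l = dist (ψ i.castSucc x') (ψ i.castSucc l) / r i.castSucc := by
          rw [hdist, mul_div_cancel_left₀ _ (hr0 i.castSucc).ne']
        rw [hdxy]
        gcongr
        · exact (hr0 i.castSucc).le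
        · exact mem_closedBall.mp hyz
      calc volume (cthickening ε L)
          ≤ ∑ i : Fin m, volume (ψ i.castSucc '' cthickening (ε / r i.castSucc) L) :=
            le_trans (measure_mono hsub) (measure_iUnion_fintype_le _ _)
        _ ≤ ∑ i : Fin m, ENNReal.ofReal (r i.castSucc ^ d)
              * (ENNReal.ofReal ((D + (ε / r i.castSucc) / ρ ^ n) ^ d * θ ^ n) * c) := by
            apply Finset.sum_le_sum
            intro i _
            rw [hvol]
            exact mul_le_mul_right (ih _ (div_nonneg hε (hr0 i.castSucc).le)) _
        _ ≤ ∑ i : Fin m, ENNReal.ofReal (r i.castSucc ^ d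
              * ((D + ε / ρ ^ (n + 1)) ^ d * θ ^ n)) * c := by
            apply Finset.sum_le_sum
            intro i _
            rw [← mul_assoc, ← ENNReal.ofReal_mul (pow_nonneg (hr0 _).le d)]
            apply mul_le_mul_left
            apply ENNReal.ofReal_le_ofReal
            apply mul_le_mul_of_nonneg_left _ (pow_nonneg (hr0 _).le d)
            apply mul_le_mul_of_nonneg_right _ (pow_nonneg hθ0 n)
            apply pow_le_pow_left₀
              (add_nonneg hD0 (div_nonneg (div_nonneg hε (hr0 _).le) (pow_nonneg hρ0.le n)))
            have h2 : ε / r i.castSucc / ρ ^ n = ε / (r i.castSucc * ρ ^ n) := by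
              rw [div_div]
            rw [h2]
            have h3 : ρ ^ (n + 1) ≤ r i.castSucc * ρ ^ n := by
              rw [pow_succ']
              exact mul_le_mul_of_nonneg_right (hρle i) (pow_nonneg hρ0.le n)
            exact add_le_add_right (div_le_div_of_nonneg_left hε (pow_pos hρ0 _) h3 : _) D
        _ = ENNReal.ofReal ((D + ε / ρ ^ (n + 1)) ^ d * θ ^ (n + 1)) * c := by
            rw [← Finset.sum_mul]
            congr 1
            rw [← ENNReal.ofReal_sum_of_nonneg (fun i _ => mul_nonneg (pow_nonneg (hr0 _).le d)
              (mul_nonneg (pow_nonneg (add_nonneg hD0 (div_nonneg hε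
                (pow_nonneg hρ0.le (n + 1)))) d) (pow_nonneg hθ0 n))), ← Finset.sum_mul]
            congr 1
            rw [hθ]
            ring

  -- Part 3 : the frontier is nonempty
  obtain ⟨x₁, hx₁⟩ : (frontier K).Nonempty := by
    rw [nonempty_iff_ne_empty]
    intro hfr
    have hclopen : IsClopen K := isClopen_iff_frontier_eq_empty.mpr hfr
    rcases isClopen_iff.mp hclopen with h | h
    · exact hKne.ne_empty h
    · rw [h] at hK
      exact (noncompact_univ (EuclideanSpace ℝ (Fin d))) hK
  -- Part 4 : conclusion on the Minkowski dimension
  set F := frontier K with hF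
  have hFL : F ⊆ L := hpart1
  have hD0 : (0 : ℝ) ≤ diam L := diam_nonneg
  set D : ℝ := diam L with hDdef
  set c := volume (ball (0 : EuclideanSpace ℝ (Fin d)) 1) with hc
  have hc0 : 0 < c := measure_ball_pos volume _ one_pos
  have hct : c ≠ ⊤ := measure_ball_lt_top.ne
  have hct0 : 0 < c.toReal := ENNReal.toReal_pos hc0.ne' hct
  set δ : ℝ := Real.log θ / Real.log ρ with hδ
  have hlogθ : Real.log θ < 0 := Real.log_neg hθ0 hθ1
  have hlogρ : Real.log ρ < 0 := Real.log_neg hρ0 hρ1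
  have hδ0 : 0 < δ := div_pos_of_neg_of_neg hlogθ hlogρ
  have hρδ : ρ ^ δ = θ := by
    rw [Real.rpow_def_of_pos hρ0, hδ, mul_comm, div_mul_cancel₀ _ hlogρ.ne, Real.exp_log hθ0]
  set Creal : ℝ := (D + 1) ^ d * c.toReal / θ with hCreal
  have hCreal0 : 0 < Creal := by positivity
  -- upper bound for the volume of thickenings of F
  have keyU : ∀ ε : ℝ, 0 < ε → ε ≤ ρ →
      volume (cthickening ε F) ≠ ⊤ ∧
      (volume (cthickening ε F)).toReal ≤ Creal * ε ^ δ := by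
    intro ε hε hερ
    have hex : ∃ n : ℕ, ρ ^ n < ε := exists_pow_lt_of_lt_one hε hρ1
    set n₀ := Nat.find hex with hn₀
    have hn₀lt : ρ ^ n₀ < ε := Nat.find_spec hex
    have hn₀pos : n₀ ≠ 0 := by
      intro h0
      rw [h0, pow_zero] at hn₀lt
      linarith
    set n := n₀ - 1 with hn
    have hnsucc : n + 1 = n₀ := Nat.succ_pred_eq_of_pos (Nat.pos_of_ne_zero hn₀pos)
    have hεlen : ε ≤ ρ ^ n := by
      by_contra h
      exact Nat.find_min hex (by omega : n < n₀) (lt_of_not_ge h)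
    have hsub : cthickening ε F ⊆ cthickening (ρ ^ n) L :=
      subset_trans (cthickening_subset_of_subset ε hFL) (cthickening_mono hεlen L)
    have hQ := Q n (ρ ^ n) (pow_nonneg hρ0.le n)
    have hρρ : (D + ρ ^ n / ρ ^ n) = D + 1 := by
      rw [div_self (pow_pos hρ0 n).ne']
    have hchain : volume (cthickening ε F)
        ≤ ENNReal.ofReal ((D + 1) ^ d * θ ^ n) * c := by
      calc volume (cthickening ε F) ≤ volume (cthickening (ρ ^ n) L) := measure_mono hsub
        _ ≤ ENNReal.ofReal ((D + ρ ^ n / ρ ^ n) ^ d * θ ^ n) * c := hQ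
        _ = ENNReal.ofReal ((D + 1) ^ d * θ ^ n) * c := by rw [hρρ]
    have hfin : volume (cthickening ε F) ≠ ⊤ :=
      (lt_of_le_of_lt hchain (ENNReal.mul_lt_top ENNReal.ofReal_lt_top hct.lt_top)).ne
    refine ⟨hfin, ?_⟩
    have hθn : θ ^ (n + 1) ≤ ε ^ δ := by
      have h1 : (ρ ^ n₀ : ℝ) ^ δ ≤ ε ^ δ :=
        Real.rpow_le_rpow (pow_nonneg hρ0.le n₀) hn₀lt.le hδ0.le
      have h2 : (ρ ^ n₀ : ℝ) ^ δ = θ ^ n₀ := by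
        rw [← Real.rpow_natCast ρ n₀, ← Real.rpow_mul hρ0.le, mul_comm,
          Real.rpow_mul hρ0.le, hρδ, Real.rpow_natCast]
      rw [hnsucc]
      rw [h2] at h1
      exact h1
    have htoReal : (volume (cthickening ε F)).toReal ≤ (D + 1) ^ d * θ ^ n * c.toReal := by
      have := ENNReal.toReal_mono (by
        exact ENNReal.mul_ne_top ENNReal.ofReal_ne_top hct) hchain
      rwa [ENNReal.toReal_mul, ENNReal.toReal_ofReal (by positivity)] at this
    calc (volume (cthickening ε F)).toReal ≤ (D + 1) ^ d * θ ^ n * c.toReal := htoReal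
      _ ≤ (D + 1) ^ d * (ε ^ δ / θ) * c.toReal := by
          apply mul_le_mul_of_nonneg_right _ hct0.le
          apply mul_le_mul_of_nonneg_left _ (by positivity)
          rw [le_div_iff₀ hθ0]
          calc θ ^ n * θ = θ ^ (n + 1) := by ring
            _ ≤ ε ^ δ := hθn
      _ = Creal * ε ^ δ := by rw [hCreal]; ring
  -- lower bound
  have keyL : ∀ ε : ℝ, 0 < ε →
      ENNReal.ofReal (ε ^ d) * c ≤ volume (cthickening ε F) := by
    intro ε hε
    have h1 : closedBall x₁ ε ⊆ cthickening ε F := by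
      rw [← cthickening_singleton x₁ hε.le]
      exact cthickening_subset_of_subset ε (singleton_subset_iff.mpr hx₁)
    calc ENNReal.ofReal (ε ^ d) * c
        = volume (closedBall x₁ ε) := by
          rw [MeasureTheory.Measure.addHaar_closedBall volume x₁ hε.le,
            finrank_euclideanSpace_fin]
      _ ≤ volume (cthickening ε F) := measure_mono h1
  -- the endgame
  set T : ℝ := max 1 ((2 / δ) * (|Real.log Creal| + 1)) with hT
  have hT1 : 1 ≤ T := le_max_left _ _
  have hT2 : (2 / δ) * (|Real.log Creal| + 1) ≤ T := le_max_right _ _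
  set η : ℝ := min ρ (Real.exp (-T)) with hη
  have hη0 : 0 < η := lt_min hρ0 (Real.exp_pos _)
  have hev : ∀ᶠ ε in nhdsWithin (0 : ℝ) (Ioi 0), ε ∈ Ioo (0 : ℝ) η :=
    Filter.eventually_of_mem (Ioo_mem_nhdsGT_of_mem ⟨le_refl 0, hη0⟩) fun _ hx => hx
  have hmain : ∀ ε ∈ Ioo (0 : ℝ) η,
      δ / 2 ≤ Real.log ((volume (cthickening ε F)).toReal) / Real.log ε ∧
      Real.log ((volume (cthickening ε F)).toReal) / Real.log ε
        ≤ (d : ℝ) + |Real.log c.toReal| := by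
    rintro ε ⟨hε0, hεη⟩
    have hερ : ε ≤ ρ := le_of_lt (lt_of_lt_of_le hεη (min_le_left _ _))
    have hlogεT : Real.log ε < -T := by
      have := Real.log_lt_log hε0 (lt_of_lt_of_le hεη (min_le_right _ _))
      rwa [Real.log_exp] at this
    have hlogεneg : Real.log ε < 0 := by linarith
    have hlogεne : Real.log ε ≠ 0 := hlogεneg.ne
    obtain ⟨hfin, hup⟩ := keyU ε hε0 hερ
    set Vt := (volume (cthickening ε F)).toReal with hVt
    have hVt0 : 0 < Vt := by
      apply ENNReal.toReal_pos _ hfin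
      have hpos : (0 : ENNReal) < ENNReal.ofReal (ε ^ d) * c :=
        ENNReal.mul_pos (ENNReal.ofReal_pos.mpr (by positivity)).ne' hc0.ne'
      exact (lt_of_lt_of_le hpos (keyL ε hε0)).ne'
    have hVtlow : ε ^ d * c.toReal ≤ Vt := by
      have := ENNReal.toReal_mono hfin (keyL ε hε0)
      rwa [ENNReal.toReal_mul, ENNReal.toReal_ofReal (by positivity)] at this
    have hlogup : Real.log Vt ≤ Real.log Creal + δ * Real.log ε := by
      calc Real.log Vt ≤ Real.log (Creal * ε ^ δ) := Real.log_le_log hVt0 hup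
        _ = Real.log Creal + δ * Real.log ε := by
            rw [Real.log_mul hCreal0.ne' (Real.rpow_pos_of_pos hε0 δ).ne',
              Real.log_rpow hε0]
    have hlogdown : (d : ℝ) * Real.log ε + Real.log c.toReal ≤ Real.log Vt := by
      have h1 : Real.log (ε ^ d * c.toReal) ≤ Real.log Vt :=
        Real.log_le_log (by positivity) hVtlow
      rwa [Real.log_mul (pow_pos hε0 d).ne' hct0.ne', Real.log_pow] at h1
    constructor
    · have h1 : (Real.log Creal + δ * Real.log ε) / Real.log ε ≤ Vt.log / Real.log ε :=
        div_le_div_of_nonpos_of_le hlogεneg.le hlogup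
      have h2 : (Real.log Creal + δ * Real.log ε) / Real.log ε
          = Real.log Creal / Real.log ε + δ := by
        field_simp
      have habs : |Real.log Creal / Real.log ε| ≤ δ / 2 := by
        rw [abs_div, div_le_iff₀ (abs_pos.mpr hlogεne)]
        have hlogabs : T ≤ |Real.log ε| := by
          rw [abs_of_neg hlogεneg]; linarith
        calc |Real.log Creal| ≤ |Real.log Creal| + 1 := by linarith
          _ = (δ / 2) * ((2 / δ) * (|Real.log Creal| + 1)) := by field_simp
          _ ≤ (δ / 2) * T := mul_le_mul_of_nonneg_left hT2 (by positivity)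
          _ ≤ δ / 2 * |Real.log ε| := mul_le_mul_of_nonneg_left hlogabs (by positivity)
      have h3 : -(δ / 2) ≤ Real.log Creal / Real.log ε :=
        le_trans (neg_le_neg habs) (neg_abs_le _)
      rw [h2] at h1
      linarith
    · have h4 : Vt.log / Real.log ε
          ≤ ((d : ℝ) * Real.log ε + Real.log c.toReal) / Real.log ε :=
        div_le_div_of_nonpos_of_le hlogεneg.le hlogdown
      have h5 : ((d : ℝ) * Real.log ε + Real.log c.toReal) / Real.log ε
          = (d : ℝ) + Real.log c.toReal / Real.log ε := by
        field_simp
      have h6 : Real.log c.toReal / Real.log ε ≤ |Real.log c.toReal| := by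
        calc Real.log c.toReal / Real.log ε ≤ |Real.log c.toReal / Real.log ε| := le_abs_self _
          _ = |Real.log c.toReal| / |Real.log ε| := abs_div _ _
          _ ≤ |Real.log c.toReal| / 1 := by
              apply div_le_div_of_nonneg_left (abs_nonneg _) one_pos
              rw [abs_of_neg hlogεneg]; linarith
          _ = |Real.log c.toReal| := div_one _
      linarith
  have hlim : δ / 2 ≤ Filter.liminf
      (fun ε : ℝ => Real.log ((volume (Metric.cthickening ε F)).toReal) / Real.log ε)
      (nhdsWithin 0 (Set.Ioi 0)) := by
    apply Filter.le_liminf_of_le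
    · apply Filter.IsBoundedUnder.isCoboundedUnder_ge
      exact Filter.isBoundedUnder_of_eventually_le (hev.mono fun ε hε => (hmain ε hε).2)
    · exact hev.mono fun ε hε => (hmain ε hε).1
  rw [upperMinkowskiDim]
  linarith
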